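/- Every finite graph G has a Gallai-Edmonds set S: every even S-component has a perfect matching, every odd S-component is factor-critical, and (if S is nonempty) S satisfies Hall's condition with surplus one in the bipartite minor ⟨G,S⟩. -/

import Mathlib

open SimpleGraph Set
set_option linter.unusedSectionVars false

variable {V : Type*} [Fintype V] [DecidableEq V]

/-- The vertex set (in `V`) of a connected component of the graph induced on `B`. -/
def compSupp (G : SimpleGraph V) (B : Set V)
    (c : (G.induce B).ConnectedComponent) : Set V :=
  Subtype.val '' c.supp

/-- `A` is (the vertex set of) a connected component of `G` restricted to `B`. -/
def IsCompOf (G : SimpleGraph V) (B : Set V) (A : Set V) : Prop :=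
  ∃ c : (G.induce B).ConnectedComponent, A = compSupp G B c

/-- The number of odd connected components of `G` restricted to `B`. -/
noncomputable def oddComps (G : SimpleGraph V) (B : Set V) : ℕ :=
  Set.ncard {c : (G.induce B).ConnectedComponent | Odd (compSupp G B c).ncard}

/-- The deficiency `df(S) = od(S) - |S|`. -/
noncomputable def df (G : SimpleGraph V) (S : Set V) : ℤ :=
  (oddComps G Sᶜ : ℤ) - S.ncard

/-- The induced subgraph on `A` has a perfect matching. -/
def HasPM (G : SimpleGraph V) (A : Set V) : Prop :=
  ∃ M : Subgraph (G.induce A), M.IsPerfectMatching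

/-- `Df(S)`: total number of vertices in components of `G - S` with no perfect matching. -/
noncomputable def Df (G : SimpleGraph V) (S : Set V) : ℕ :=
  Set.ncard (⋃ c ∈ {c : (G.induce Sᶜ).ConnectedComponent |
    ¬ HasPM G (compSupp G Sᶜ c)}, compSupp G Sᶜ c)

/-- The set of `M`-exposed vertices. -/
def exposed (G : SimpleGraph V) (M : Subgraph G) : Set V :=
  {v | v ∉ M.support}

/-- `A` induces a factor-critical graph. -/
def FactorCritical (G : SimpleGraph V) (A : Set V) : Prop :=
  ∀ v ∈ A, HasPM G (A \ {v})

/-- The neighborhood of `T ⊆ S` in the bipartite minor `⟨G,S⟩`: the odd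
`S`-components adjacent to some vertex of `T`. -/
def minorNbhd (G : SimpleGraph V) (S T : Set V) :
    Set (G.induce Sᶜ).ConnectedComponent :=
  {c | Odd (compSupp G Sᶜ c).ncard ∧ ∃ u ∈ T, ∃ w ∈ compSupp G Sᶜ c, G.Adj u w}

/-- `S` is a Gallai-Edmonds set of `G`. -/
def GallaiEdmonds (G : SimpleGraph V) (S : Set V) : Prop :=
  (∀ c : (G.induce Sᶜ).ConnectedComponent,
      Even (compSupp G Sᶜ c).ncard → HasPM G (compSupp G Sᶜ c)) ∧
  (∀ c : (G.induce Sᶜ).ConnectedComponent,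
      Odd (compSupp G Sᶜ c).ncard → FactorCritical G (compSupp G Sᶜ c)) ∧
  (∀ T ⊆ S, T.Nonempty → T.ncard + 1 ≤ (minorNbhd G S T).ncard)

/-- `w` and `w'` lie in the same `S`-component. -/
def SameComp (G : SimpleGraph V) (S : Set V) (w w' : V) : Prop :=
  ∃ c : (G.induce Sᶜ).ConnectedComponent,
    w ∈ compSupp G Sᶜ c ∧ w' ∈ compSupp G Sᶜ c

/-- `M` is a maximum matching of `G`. -/
def IsMaximumMatching (G : SimpleGraph V) (M : Subgraph G) : Prop :=
  M.IsMatching ∧ ∀ M' : Subgraph G, M'.IsMatching →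
    M'.edgeSet.ncard ≤ M.edgeSet.ncard

section Basic

variable {G : SimpleGraph V} {B A : Set V}

lemma induce_adj' {a b : ↥B} : (G.induce B).Adj a b ↔ G.Adj a b := Iff.rfl

lemma mem_compSupp {x : V} {c : (G.induce B).ConnectedComponent} :
    x ∈ compSupp G B c ↔ ∃ hx : x ∈ B, (G.induce B).connectedComponentMk ⟨x, hx⟩ = c := by
  constructor
  · rintro ⟨⟨y, hy⟩, h1, rfl⟩
    exact ⟨hy, h1⟩
  · rintro ⟨hx, h⟩
    exact ⟨⟨x, hx⟩, h, rfl⟩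

lemma compSupp_subset (c : (G.induce B).ConnectedComponent) : compSupp G B c ⊆ B := by
  rintro x ⟨⟨y, hy⟩, _, rfl⟩; exact hy

lemma compSupp_nonempty (c : (G.induce B).ConnectedComponent) : (compSupp G B c).Nonempty := by
  obtain ⟨v, hv⟩ := c.exists_rep
  exact ⟨v.1, v, hv, rfl⟩

lemma compSupp_injective : Function.Injective (compSupp G B) := by
  intro c c' h
  exact ConnectedComponent.supp_injective (Subtype.val_injective.image_injective h)

lemma compSupp_disjoint {c c' : (G.induce B).ConnectedComponent} (h : c ≠ c') :
    Disjoint (compSupp G B c) (compSupp G B c') := by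
  rw [Set.disjoint_left]
  rintro x hx hx'
  rw [mem_compSupp] at hx hx'
  obtain ⟨h1, h2⟩ := hx
  obtain ⟨h1', h2'⟩ := hx'
  exact h (h2 ▸ h2' ▸ rfl)

lemma adj_mem_compSupp {x y : V} {c : (G.induce B).ConnectedComponent}
    (hx : x ∈ compSupp G B c) (hy : y ∈ B) (hadj : G.Adj x y) : y ∈ compSupp G B c := by
  rw [mem_compSupp] at hx ⊢
  obtain ⟨hxB, rfl⟩ := hx
  refine ⟨hy, ?_⟩
  exact ConnectedComponent.connectedComponentMk_eq_of_adj (G := G.induce B)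
    (v := ⟨y, hy⟩) (w := ⟨x, hxB⟩) hadj.symm

/-- Walk transfer: a walk in `G.induce B` whose vertices all lie in `B'` gives
reachability in `G.induce B'`. -/
lemma reachable_of_walk_subset {B' : Set V} {u v : ↥B}
    (w : (G.induce B).Walk u v) (hw : ∀ x ∈ w.support, (x : V) ∈ B')
    (hu : (u : V) ∈ B') (hv : (v : V) ∈ B') :
    (G.induce B').Reachable ⟨u, hu⟩ ⟨v, hv⟩ := by
  induction w with
  | nil => rfl
  | @cons a b c h p ih =>
      have hb : (b : V) ∈ B' := hw b (by simp)
      have h1 : (G.induce B').Adj ⟨a, hu⟩ ⟨b, hb⟩ := h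
      exact (h1.reachable).trans (ih (fun x hx => hw x (by simp [hx])) hb hv)

lemma reachable_induce_mono {B' : Set V} (hBB' : B ⊆ B') {u v : ↥B}
    (h : (G.induce B).Reachable u v) :
    (G.induce B').Reachable ⟨u, hBB' u.2⟩ ⟨v, hBB' v.2⟩ := by
  obtain ⟨w⟩ := h
  exact reachable_of_walk_subset w (fun x _ => hBB' x.2) _ _

lemma walk_support_mem_supp {u v : ↥B} (w : (G.induce B).Walk u v)
    {c : (G.induce B).ConnectedComponent} (hu : u ∈ c.supp) :
    ∀ x ∈ w.support, x ∈ c.supp := by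
  intro x hx
  rw [ConnectedComponent.mem_supp_iff] at hu ⊢
  rw [← hu]
  exact ConnectedComponent.sound ((w.takeUntil x hx).reachable.symm)

lemma reachable_in_compSupp {x y : V} {c : (G.induce B).ConnectedComponent}
    (hx : x ∈ compSupp G B c) (hy : y ∈ compSupp G B c) :
    (G.induce (compSupp G B c)).Reachable ⟨x, hx⟩ ⟨y, hy⟩ := by
  rw [mem_compSupp] at hx hy
  obtain ⟨hxB, hcx⟩ := hx
  obtain ⟨hyB, hcy⟩ := hy
  have hreach : (G.induce B).Reachable ⟨x, hxB⟩ ⟨y, hyB⟩ := by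
    rw [← ConnectedComponent.eq, hcx, hcy]
  subst hcx
  obtain ⟨w⟩ := hreach
  have hsupp : ∀ z ∈ w.support, (z : V) ∈ compSupp G B ((G.induce B).connectedComponentMk ⟨x, hxB⟩) := by
    intro z hz
    exact ⟨z, walk_support_mem_supp w rfl z hz, rfl⟩
  exact reachable_of_walk_subset w hsupp _ _

/-- Characterization of being a component. -/
lemma isCompOf_iff :
    IsCompOf G B A ↔ A.Nonempty ∧ A ⊆ B ∧
      (∀ x (hx : x ∈ A), ∀ y (hy : y ∈ A), (G.induce A).Reachable ⟨x, hx⟩ ⟨y, hy⟩) ∧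
      (∀ x ∈ A, ∀ y ∈ B, G.Adj x y → y ∈ A) := by
  constructor
  · rintro ⟨c, rfl⟩
    refine ⟨compSupp_nonempty c, compSupp_subset c, ?_, ?_⟩
    · intro x hx y hy; exact reachable_in_compSupp hx hy
    · intro x hx y hy hadj; exact adj_mem_compSupp hx hy hadj
  · rintro ⟨⟨x0, hx0⟩, hAB, hconn, hclosed⟩
    refine ⟨(G.induce B).connectedComponentMk ⟨x0, hAB hx0⟩, ?_⟩
    apply Set.Subset.antisymm
    · intro y hy
      rw [mem_compSupp]
      refine ⟨hAB hy, ?_⟩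
      rw [ConnectedComponent.eq]
      exact (reachable_induce_mono hAB (hconn y hy x0 hx0))
    · rintro y hy
      rw [mem_compSupp] at hy
      obtain ⟨hyB, hcy⟩ := hy
      rw [ConnectedComponent.eq] at hcy
      obtain ⟨w⟩ := hcy
      have : ∀ (u v : ↥B) (w : (G.induce B).Walk u v), (v : V) ∈ A → (u : V) ∈ A := by
        intro u v w
        induction w with
        | nil => exact id
        | @cons a b c h p ih =>
            intro hc
            have hb : (b : V) ∈ A := ih hc
            by_contra ha
            exact ha (hclosed b hb a a.2 (induce_adj'.mp h).symm)
      exact this _ _ w hx0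

lemma IsCompOf.nonempty (h : IsCompOf G B A) : A.Nonempty := (isCompOf_iff.mp h).1

lemma IsCompOf.subset (h : IsCompOf G B A) : A ⊆ B := (isCompOf_iff.mp h).2.1

lemma IsCompOf.closed (h : IsCompOf G B A) : ∀ x ∈ A, ∀ y ∈ B, G.Adj x y → y ∈ A :=
  (isCompOf_iff.mp h).2.2.2

/-- A component persists when the ambient set shrinks but still contains it. -/
lemma IsCompOf.mono_down {B' : Set V} (h : IsCompOf G B A) (hAB' : A ⊆ B') (hB'B : B' ⊆ B) :
    IsCompOf G B' A := by
  rw [isCompOf_iff] at h ⊢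
  exact ⟨h.1, hAB', h.2.2.1, fun x hx y hy hadj => h.2.2.2 x hx y (hB'B hy) hadj⟩

/-- A component persists when the ambient set grows, provided no edges into the new part. -/
lemma IsCompOf.mono_up {B' : Set V} (h : IsCompOf G B A) (hBB' : B ⊆ B')
    (hnoadj : ∀ x ∈ A, ∀ y ∈ B' \ B, ¬ G.Adj x y) : IsCompOf G B' A := by
  rw [isCompOf_iff] at h ⊢
  refine ⟨h.1, h.2.1.trans hBB', h.2.2.1, fun x hx y hy hadj => ?_⟩
  by_cases hyB : y ∈ B
  · exact h.2.2.2 x hx y hyB hadj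
  · exact absurd hadj (hnoadj x hx y ⟨hy, hyB⟩)

lemma exists_isCompOf_mem {x : V} (hx : x ∈ B) : ∃ A, IsCompOf G B A ∧ x ∈ A :=
  ⟨compSupp G B ((G.induce B).connectedComponentMk ⟨x, hx⟩),
    ⟨_, rfl⟩, ⟨⟨x, hx⟩, rfl, rfl⟩⟩

/-- Two components (of possibly different ambient sets with `B' ⊆ B`) that intersect satisfy
containment. -/
lemma IsCompOf.subset_of_inter {B' A' : Set V} (h : IsCompOf G B A) (h' : IsCompOf G B' A')
    (hB'B : B' ⊆ B) (hint : (A' ∩ A).Nonempty) : A' ⊆ A := by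
  obtain ⟨x, hxA', hxA⟩ := hint
  rw [isCompOf_iff] at h h'
  intro y hy
  have hr : (G.induce A').Reachable ⟨x, hxA'⟩ ⟨y, hy⟩ := h'.2.2.1 x hxA' y hy
  have hr2 : (G.induce B).Reachable ⟨x, h'.2.1.trans hB'B hxA'⟩ ⟨y, h'.2.1.trans hB'B hy⟩ :=
    reachable_induce_mono (h'.2.1.trans hB'B) hr
  -- now walk in induce B from x ∈ A; stays in A by closure
  obtain ⟨w⟩ := hr2
  have : ∀ (u v : ↥B) (w : (G.induce B).Walk u v), (u : V) ∈ A → (v : V) ∈ A := by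
    intro u v w
    induction w with
    | nil => exact id
    | @cons a b c hadj p ih =>
        intro ha
        exact ih (h.2.2.2 a ha b b.2 hadj)
  exact this _ _ w hxA

lemma IsCompOf.eq_of_inter {A' : Set V} (h : IsCompOf G B A) (h' : IsCompOf G B A')
    (hint : (A' ∩ A).Nonempty) : A' = A := by
  obtain ⟨c, rfl⟩ := h
  obtain ⟨c', rfl⟩ := h'
  by_contra hne
  have hcc : c' ≠ c := fun h => hne (by rw [h])
  exact Set.not_disjoint_iff_nonempty_inter.mpr hint (compSupp_disjoint hcc)

end Basic

section Counting

variable {G : SimpleGraph V} {B A : Set V}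

/-- The set of supports of odd components of `G` restricted to `B`. -/
def oddSupps (G : SimpleGraph V) (B : Set V) : Set (Set V) :=
  {A | IsCompOf G B A ∧ Odd A.ncard}

lemma oddComps_eq_oddSupps (G : SimpleGraph V) (B : Set V) :
    oddComps G B = (oddSupps G B).ncard := by
  rw [oddComps, ← Set.ncard_image_of_injective _ (compSupp_injective (G := G) (B := B))]
  congr 1
  ext A
  constructor
  · rintro ⟨c, hc, rfl⟩; exact ⟨⟨c, rfl⟩, hc⟩
  · rintro ⟨⟨c, rfl⟩, hodd⟩; exact ⟨c, hodd, rfl⟩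

lemma isCompOf_diff_iff (hA : IsCompOf G B A) {A' : Set V} :
    IsCompOf G (B \ A) A' ↔ IsCompOf G B A' ∧ A' ≠ A := by
  constructor
  · intro h
    have hdisj : Disjoint A' A := Set.disjoint_of_subset_left h.subset disjoint_sdiff_left
    refine ⟨h.mono_up diff_subset ?_, ?_⟩
    · intro x hx y hy hadj
      have hyA : y ∈ A := by
        have := Set.diff_diff_cancel_left hA.subset  -- B \ (B \ A) = A
        rw [← this]; exact hy
      exact absurd (hA.closed y hyA x (diff_subset (h.subset hx)) hadj.symm)
        (fun hxA => (Set.disjoint_left.mp hdisj hx) hxA)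
    · rintro rfl
      obtain ⟨x, hx⟩ := h.nonempty
      exact (h.subset hx).2 hx
  · rintro ⟨h, hne⟩
    refine h.mono_down ?_ diff_subset
    intro x hx
    refine ⟨h.subset hx, fun hxA => ?_⟩
    exact hne (hA.eq_of_inter h ⟨x, hx, hxA⟩)

lemma ncard_pos_of_nonempty {α : Type*} [Finite α] {s : Set α} (h : s.Nonempty) : 0 < s.ncard :=
  Set.ncard_pos (s.toFinite) |>.mpr h

lemma ncard_decomp (hA : IsCompOf G B A) : B.ncard = A.ncard + (B \ A).ncard := by
  rw [← Set.ncard_union_eq (disjoint_sdiff_right) (A.toFinite) ((B \ A).toFinite),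
    Set.union_diff_cancel' (le_refl A) hA.subset]

lemma oddSupps_parity (G : SimpleGraph V) : ∀ n (B : Set V), B.ncard = n →
    (oddSupps G B).ncard % 2 = B.ncard % 2 := by
  intro n
  induction n using Nat.strong_induction_on with
  | _ n ih =>
    intro B hB
    rcases B.eq_empty_or_nonempty with rfl | ⟨x, hx⟩
    · have : oddSupps G (∅ : Set V) = ∅ := by
        ext A
        simp only [oddSupps, Set.mem_setOf_eq, Set.mem_empty_iff_false, iff_false, not_and]
        intro h
        obtain ⟨y, hy⟩ := h.nonempty
        exact (Set.notMem_empty y (h.subset hy)).elim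
      simp [this]
    · obtain ⟨A, hA, hxA⟩ := exists_isCompOf_mem (G := G) hx
      have hAne : A.Nonempty := hA.nonempty
      have hdecomp : B.ncard = A.ncard + (B \ A).ncard := ncard_decomp hA
      have hApos : 0 < A.ncard := ncard_pos_of_nonempty hAne
      have hlt : (B \ A).ncard < n := by omega
      have hodd : oddSupps G B = (oddSupps G (B \ A)) ∪ (if Odd A.ncard then {A} else ∅) := by
        ext A'
        simp only [Set.mem_union, oddSupps, Set.mem_setOf_eq]
        constructor
        · rintro ⟨h1, h2⟩
          by_cases hAA : A' = A
          · subst hAA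
            right; simp [h2]
          · left; exact ⟨(isCompOf_diff_iff hA).mpr ⟨h1, hAA⟩, h2⟩
        · rintro (⟨h1, h2⟩ | h1)
          · exact ⟨((isCompOf_diff_iff hA).mp h1).1, h2⟩
          · by_cases hoddA : Odd A.ncard
            · simp only [if_pos hoddA, Set.mem_singleton_iff] at h1
              subst h1; exact ⟨hA, hoddA⟩
            · simp [if_neg hoddA] at h1
      have hAnotin : A ∉ oddSupps G (B \ A) := by
        rintro ⟨h1, -⟩
        obtain ⟨y, hy⟩ := hAne
        exact (h1.subset hy).2 hy
      have hcard : (oddSupps G B).ncard =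
          (oddSupps G (B \ A)).ncard + (if Odd A.ncard then 1 else 0) := by
        rw [hodd]
        by_cases hoddA : Odd A.ncard
        · simp only [if_pos hoddA]
          rw [Set.ncard_union_eq (Set.disjoint_singleton_right.mpr hAnotin)
            (Set.toFinite _) (Set.toFinite _), Set.ncard_singleton]
        · simp [if_neg hoddA, Set.ncard_union_eq, Set.union_empty]
      have := ih _ hlt (B \ A) rfl
      rw [hcard, hB] at *
      by_cases hoddA : Odd A.ncard
      · simp only [if_pos hoddA]
        rw [Nat.odd_iff] at hoddA
        omega
      · simp only [if_neg hoddA]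
        rw [Nat.odd_iff] at hoddA
        omega

lemma exists_odd_comp (G : SimpleGraph V) {B : Set V} (h : Odd B.ncard) :
    ∃ A, IsCompOf G B A ∧ Odd A.ncard := by
  have := oddSupps_parity G B.ncard B rfl
  rw [Nat.odd_iff] at h
  rw [h] at this
  have hpos : 0 < (oddSupps G B).ncard := by omega
  obtain ⟨A, hA⟩ := (Set.ncard_pos (Set.toFinite _)).mp hpos
  exact ⟨A, hA.1, hA.2⟩

end Counting

section Matchings

variable {G : SimpleGraph V} {A B : Set V}

/-- The inclusion homomorphism from an induced subgraph. -/
def inclHom (G : SimpleGraph V) (A : Set V) : G.induce A →g G where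
  toFun := Subtype.val
  map_rel' := fun h => h

lemma hasPM_iff : HasPM G A ↔ ∃ M : Subgraph G, M.IsMatching ∧ M.verts = A := by
  constructor
  · rintro ⟨M, hM⟩
    refine ⟨M.map (inclHom G A), hM.1.map _ Subtype.val_injective, ?_⟩
    rw [Subgraph.map_verts, hM.2.verts_eq_univ, Set.image_univ]
    have hc : ⇑(inclHom G A) = (Subtype.val : A → V) := rfl
    rw [hc, Subtype.range_val]
  · rintro ⟨M, hM, rfl⟩
    refine ⟨{ verts := Set.univ
              Adj := fun a b => M.Adj a.1 b.1
              adj_sub := fun {a b} h => M.adj_sub h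
              edge_vert := fun {a b} _ => trivial
              symm := ⟨fun a b h => h.symm⟩ }, ?_, fun v => trivial⟩
    rintro ⟨v, hv⟩ -
    obtain ⟨w, hw, huniq⟩ := hM hv
    refine ⟨⟨w, M.edge_vert hw.symm⟩, hw, ?_⟩
    rintro ⟨w', hw'⟩ hadj
    exact Subtype.ext (huniq w' hadj)

lemma HasPM.even_ncard (h : HasPM G A) : Even A.ncard := by
  classical
  obtain ⟨M, hM, rfl⟩ := hasPM_iff.mp h
  haveI : Fintype M.verts := Fintype.ofFinite _
  rw [Set.ncard_eq_toFinset_card']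
  exact hM.even_card

lemma hasPM_pair {v w : V} (h : G.Adj v w) : HasPM G {v, w} := by
  rw [hasPM_iff]
  exact ⟨G.subgraphOfAdj h, Subgraph.IsMatching.subgraphOfAdj h, by simp⟩

lemma hasPM_iUnion {ι : Type*} (f : ι → Set V) (hdisj : Pairwise (Function.onFun Disjoint f))
    (h : ∀ i, HasPM G (f i)) : HasPM G (⋃ i, f i) := by
  classical
  choose M hM hMv using fun i => hasPM_iff.mp (h i)
  rw [hasPM_iff]
  refine ⟨⨆ i, M i, Subgraph.IsMatching.iSup hM ?_, ?_⟩
  · intro i j hij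
    rw [(hM i).support_eq_verts, (hM j).support_eq_verts, hMv, hMv]
    exact hdisj hij
  · rw [Subgraph.verts_iSup]
    simp only [hMv]

lemma hasPM_empty : HasPM G ∅ := by
  rw [hasPM_iff]
  refine ⟨⊥, ?_, Subgraph.verts_bot⟩
  intro v hv
  rw [Subgraph.verts_bot] at hv
  exact absurd hv (Set.notMem_empty v)

/-- Restrict a matching to a component whose support it covers. -/
lemma hasPM_restrict {M : Subgraph G} (hM : M.IsMatching) {B'' K : Set V}
    (hK : IsCompOf G B'' K) (hMB : M.verts ⊆ B'') (hKM : K ⊆ M.verts) : HasPM G K := by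
  rw [hasPM_iff]
  refine ⟨M.induce K, ?_, rfl⟩
  intro v hv
  obtain ⟨w, hw, huniq⟩ := hM (hKM hv)
  have hwK : w ∈ K := hK.closed v hv w (hMB (M.edge_vert hw.symm)) (M.adj_sub hw)
  refine ⟨w, ⟨hv, hwK, hw⟩, ?_⟩
  rintro w' ⟨-, -, hadj⟩
  exact huniq w' hadj
end Matchings

section Transfer

variable {G : SimpleGraph V} {A : Set V}

/-- The canonical isomorphism between `(G.induce A).induce B` and `G.induce (val '' B)`. -/
noncomputable def induceInduceIso (G : SimpleGraph V) (A : Set V) (B : Set ↥A) :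
    (G.induce A).induce B ≃g G.induce (Subtype.val '' B) where
  toEquiv := Equiv.Set.image Subtype.val B Subtype.val_injective
  map_rel_iff' := Iff.rfl

lemma isCompOf_image_iff {B A' : Set ↥A} :
    IsCompOf (G.induce A) B A' ↔ IsCompOf G (Subtype.val '' B) (Subtype.val '' A') := by
  haveI : Fintype ↥A := Fintype.ofFinite ↥A
  haveI : DecidableEq ↥A := Classical.decEq _
  rw [isCompOf_iff, isCompOf_iff]
  constructor
  · rintro ⟨hne, hsub, hreach, hclosed⟩
    refine ⟨hne.image _, Set.image_mono hsub, ?_, ?_⟩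
    · rintro x ⟨a, ha, rfl⟩ y ⟨b, hb, rfl⟩
      have := (Iso.reachable_iff (φ := induceInduceIso G A A')
        (u := ⟨a, ha⟩) (v := ⟨b, hb⟩)).mpr (hreach a ha b hb)
      convert this using 2 <;> exact Subtype.ext rfl
    · rintro x ⟨a, ha, rfl⟩ y ⟨b, hb, rfl⟩ hadj
      exact ⟨b, hclosed a ha b hb hadj, rfl⟩
  · rintro ⟨hne, hsub, hreach, hclosed⟩
    obtain ⟨x0, hx0⟩ := hne
    refine ⟨?_, ?_, ?_, ?_⟩
    · obtain ⟨a, ha, -⟩ := hx0; exact ⟨a, ha⟩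
    · intro a ha
      have : (a : V) ∈ Subtype.val '' B := hsub ⟨a, ha, rfl⟩
      obtain ⟨b, hb, hba⟩ := this
      rwa [← Subtype.val_injective hba]
    · intro a ha b hb
      have := (Iso.reachable_iff (φ := induceInduceIso G A A')
        (u := ⟨a, ha⟩) (v := ⟨b, hb⟩)).mp ?_
      · exact this
      · have h2 := hreach a.1 ⟨a, ha, rfl⟩ b.1 ⟨b, hb, rfl⟩
        convert h2 using 2 <;> exact Subtype.ext rfl
    · intro a ha b hb hadj
      have := hclosed a.1 ⟨a, ha, rfl⟩ b.1 ⟨b, hb, rfl⟩ hadj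
      obtain ⟨b', hb', hbb⟩ := this
      rwa [← Subtype.val_injective hbb]

lemma oddSupps_image (B : Set ↥A) :
    oddSupps G (Subtype.val '' B) =
      (Set.image (Subtype.val : ↥A → V)) '' (oddSupps (G.induce A) B) := by
  ext A''
  constructor
  · rintro ⟨h1, h2⟩
    have hsub : A'' ⊆ Set.range (Subtype.val : ↥A → V) :=
      h1.subset.trans ((Set.image_subset_range _ _))
    refine ⟨Subtype.val ⁻¹' A'', ⟨?_, ?_⟩, Set.image_preimage_eq_of_subset hsub⟩
    · rw [isCompOf_image_iff, Set.image_preimage_eq_of_subset hsub]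
      exact h1
    · rwa [← Set.ncard_image_of_injective _ Subtype.val_injective,
        Set.image_preimage_eq_of_subset hsub]
  · rintro ⟨A', ⟨h1, h2⟩, rfl⟩
    exact ⟨isCompOf_image_iff.mp h1,
      by rwa [Set.ncard_image_of_injective _ Subtype.val_injective]⟩

lemma ncard_oddSupps_image (B : Set ↥A) :
    (oddSupps G (Subtype.val '' B)).ncard = (oddSupps (G.induce A) B).ncard := by
  rw [oddSupps_image]
  exact Set.ncard_image_of_injective _ (Set.image_injective.mpr Subtype.val_injective)

lemma HasPM.image {W : Set ↥A} (h : HasPM (G.induce A) W) : HasPM G (Subtype.val '' W) := by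
  obtain ⟨M, hM⟩ := h
  -- M : Subgraph ((G.induce A).induce W); move along iso, then include
  let φ := induceInduceIso G A W
  have h2 : HasPM G (Subtype.val '' W) := by
    refine ⟨?_, ?_, ?_⟩
    · exact M.map φ.toHom
    · exact hM.1.map _ (φ.toEquiv.injective)
    · intro v
      rw [Subgraph.map_verts, hM.2.verts_eq_univ]
      exact ⟨φ.symm v, trivial, φ.apply_symm_apply v⟩
  exact h2

end Transfer

section DfLemmas

variable {G : SimpleGraph V}

lemma df_eq (G : SimpleGraph V) (S : Set V) :
    df G S = ((oddSupps G Sᶜ).ncard : ℤ) - S.ncard := by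
  rw [df, oddComps_eq_oddSupps]

lemma df_parity (G : SimpleGraph V) (S : Set V) :
    df G S % 2 = (Fintype.card V : ℤ) % 2 := by
  have h1 : (oddSupps G Sᶜ).ncard % 2 = Sᶜ.ncard % 2 := oddSupps_parity G _ _ rfl
  have h2 : S.ncard + Sᶜ.ncard = Fintype.card V := by
    rw [← Nat.card_eq_fintype_card]
    exact Set.ncard_add_ncard_compl S
  rw [df_eq]
  omega

/-- Adding a vertex of an even component does not decrease the deficiency. -/
lemma df_le_insert_of_even_comp {S A : Set V} (hA : IsCompOf G Sᶜ A) (hEven : Even A.ncard)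
    {v : V} (hv : v ∈ A) : df G S ≤ df G (insert v S) := by
  have hvS : v ∉ S := hA.subset hv
  have hcompl : (insert v S)ᶜ = Sᶜ \ {v} := by
    ext x; simp [not_or, and_comm]
  have hsub : oddSupps G Sᶜ ⊆ oddSupps G (Sᶜ \ {v}) := by
    rintro A₁ ⟨h1, h2⟩
    have hne : A₁ ≠ A := by
      rintro rfl
      exact (Nat.not_even_iff_odd.mpr h2) hEven
    have hvA₁ : v ∉ A₁ := fun hvm => hne (hA.eq_of_inter h1 ⟨v, hvm, hv⟩)
    refine ⟨h1.mono_down (fun x hx => ⟨h1.subset hx, ?_⟩) diff_subset, h2⟩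
    simp only [Set.mem_singleton_iff]
    rintro rfl
    exact hvA₁ hx
  have hApos : 0 < A.ncard := ncard_pos_of_nonempty ⟨v, hv⟩
  have hAv : Odd (A \ {v}).ncard := by
    have h1 : (A \ {v}).ncard = A.ncard - 1 := Set.ncard_diff_singleton_of_mem hv
    rw [Nat.odd_iff, h1]
    rw [Nat.even_iff] at hEven
    omega
  obtain ⟨D, hD, hDodd⟩ := exists_odd_comp G hAv
  have hDsubA : D ⊆ A := hD.subset.trans diff_subset
  have hDcomp : IsCompOf G (Sᶜ \ {v}) D := by
    refine hD.mono_up (fun x hx => ⟨hA.subset hx.1, hx.2⟩) ?_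
    rintro x hx y ⟨⟨hySc, hyv⟩, hyAv⟩ hadj
    have : y ∈ A := hA.closed x (hDsubA hx) y hySc hadj
    exact hyAv ⟨this, hyv⟩
  have hDnotin : D ∉ oddSupps G Sᶜ := by
    rintro ⟨h1, -⟩
    obtain ⟨x, hx⟩ := hD.nonempty
    have hDA : D = A := hA.eq_of_inter h1 ⟨x, hx, hDsubA hx⟩
    exact (hD.subset (hDA ▸ hv)).2 rfl
  have hcount : (oddSupps G Sᶜ).ncard + 1 ≤ (oddSupps G (Sᶜ \ {v})).ncard := by
    have hins : insert D (oddSupps G Sᶜ) ⊆ oddSupps G (Sᶜ \ {v}) :=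
      Set.insert_subset ⟨hDcomp, hDodd⟩ hsub
    have := Set.ncard_le_ncard hins (Set.toFinite _)
    rwa [Set.ncard_insert_of_notMem hDnotin (Set.toFinite _)] at this
  rw [df_eq, df_eq, hcompl, Set.ncard_insert_of_notMem hvS (Set.toFinite _)]
  push_cast
  omega

/-- Counting bound for the factor-critical argument. -/
lemma key2 {S A : Set V} (hA : IsCompOf G Sᶜ A) {v : V} (hv : v ∈ A)
    {T : Set V} (hT : T ⊆ A \ {v}) :
    ((oddSupps G Sᶜ).ncard : ℤ) - 1 + ((oddSupps G ((A \ {v}) \ T)).ncard : ℤ)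
      ≤ ((oddSupps G (Sᶜ \ insert v T)).ncard : ℤ) := by
  set U1 := (oddSupps G Sᶜ) \ {A} with hU1def
  set U2 := oddSupps G ((A \ {v}) \ T) with hU2def
  have hins : insert v T ⊆ A := Set.insert_subset hv (hT.trans diff_subset)
  have h1 : U1 ⊆ oddSupps G (Sᶜ \ insert v T) := by
    rintro A₁ ⟨⟨hc, ho⟩, hne⟩
    simp only [Set.mem_singleton_iff] at hne
    have hdisjA : ∀ x ∈ A₁, x ∉ A := fun x hx hxA => hne (hA.eq_of_inter hc ⟨x, hx, hxA⟩)
    refine ⟨hc.mono_down (fun x hx => ⟨hc.subset hx, fun hmem => hdisjA x hx (hins hmem)⟩)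
      diff_subset, ho⟩
  have h2 : U2 ⊆ oddSupps G (Sᶜ \ insert v T) := by
    rintro D ⟨hc, ho⟩
    have hDsubA : D ⊆ A := hc.subset.trans (diff_subset.trans diff_subset)
    refine ⟨hc.mono_up ?_ ?_, ho⟩
    · rintro x ⟨⟨hxA, hxv⟩, hxT⟩
      refine ⟨hA.subset hxA, ?_⟩
      simp only [Set.mem_insert_iff, Set.mem_singleton_iff] at hxv ⊢
      tauto
    · rintro x hx y ⟨⟨hySc, hyiT⟩, hyD⟩ hadj
      have hyA : y ∈ A := hA.closed x (hDsubA hx) y hySc hadj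
      simp only [Set.mem_insert_iff] at hyiT
      push_neg at hyiT
      exact hyD ⟨⟨hyA, fun h => hyiT.1 h⟩, hyiT.2⟩
  have hdisj : Disjoint U1 U2 := by
    rw [Set.disjoint_left]
    rintro A₀ ⟨⟨hc, -⟩, hne⟩ ⟨hc2, -⟩
    simp only [Set.mem_singleton_iff] at hne
    obtain ⟨x, hx⟩ := hc2.nonempty
    exact hne (hA.eq_of_inter hc
      ⟨x, hx, (hc2.subset.trans (diff_subset.trans diff_subset)) hx⟩)
  have hcard : U1.ncard + U2.ncard ≤ (oddSupps G (Sᶜ \ insert v T)).ncard := by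
    rw [← Set.ncard_union_eq hdisj (Set.toFinite _) (Set.toFinite _)]
    exact Set.ncard_le_ncard (Set.union_subset h1 h2) (Set.toFinite _)
  have hU1card : (oddSupps G Sᶜ).ncard ≤ U1.ncard + 1 := by
    have hsub : oddSupps G Sᶜ ⊆ insert A U1 := by
      intro A₁ h
      by_cases hAA : A₁ = A
      · exact hAA ▸ Set.mem_insert _ _
      · exact Set.mem_insert_of_mem _ ⟨h, hAA⟩
    calc (oddSupps G Sᶜ).ncard ≤ (insert A U1).ncard :=
          Set.ncard_le_ncard hsub (Set.toFinite _)
      _ ≤ U1.ncard + 1 := Set.ncard_insert_le _ _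
  push_cast
  omega

/-- The supports version of `minorNbhd`. -/
def nbhdSupps (G : SimpleGraph V) (S T : Set V) : Set (Set V) :=
  {A | IsCompOf G Sᶜ A ∧ Odd A.ncard ∧ ∃ u ∈ T, ∃ w ∈ A, G.Adj u w}

lemma minorNbhd_ncard (S T : Set V) :
    (minorNbhd G S T).ncard = (nbhdSupps G S T).ncard := by
  rw [← Set.ncard_image_of_injective (minorNbhd G S T) (compSupp_injective (G := G) (B := Sᶜ))]
  congr 1
  ext A
  constructor
  · rintro ⟨c, ⟨hodd, hadj⟩, rfl⟩; exact ⟨⟨c, rfl⟩, hodd, hadj⟩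
  · rintro ⟨⟨c, rfl⟩, hodd, hadj⟩; exact ⟨c, ⟨hodd, hadj⟩, rfl⟩

lemma key3 (S T : Set V) :
    (oddSupps G Sᶜ).ncard ≤ (oddSupps G (S \ T)ᶜ).ncard + (nbhdSupps G S T).ncard := by
  have h1 : oddSupps G Sᶜ \ nbhdSupps G S T ⊆ oddSupps G (S \ T)ᶜ := by
    rintro A₁ ⟨⟨hcomp, hodd⟩, hnadj⟩
    refine ⟨hcomp.mono_up (fun x hx hxST => hx hxST.1) ?_, hodd⟩
    rintro x hx y ⟨hyST, hySc⟩ hadj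
    simp only [Set.mem_compl_iff, Set.mem_diff, not_and, not_not] at hyST hySc
    exact hnadj ⟨hcomp, hodd, y, hyST hySc, x, hx, hadj.symm⟩
  calc (oddSupps G Sᶜ).ncard
      ≤ (oddSupps G Sᶜ \ nbhdSupps G S T).ncard + (nbhdSupps G S T).ncard :=
        Set.ncard_le_ncard_diff_add_ncard _ _ (Set.toFinite _)
    _ ≤ (oddSupps G (S \ T)ᶜ).ncard + (nbhdSupps G S T).ncard :=
        Nat.add_le_add_right (Set.ncard_le_ncard h1 (Set.toFinite _)) _

lemma key5 {S : Set V} (hmax : ∀ S', df G S' ≤ df G S) {T : Set V} (hT : T ⊆ S) :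
    T.ncard ≤ (nbhdSupps G S T).ncard := by
  have h3 := key3 (G := G) S T
  have h4 := hmax (S \ T)
  rw [df_eq, df_eq] at h4
  have h5 : (S \ T).ncard = S.ncard - T.ncard := Set.ncard_diff hT
  have h6 : T.ncard ≤ S.ncard := Set.ncard_le_ncard hT (Set.toFinite _)
  omega

/-- Walking from inside a component to a vertex outside its ambient set crosses the boundary. -/
lemma exists_boundary {B B' D : Set V} (hD : IsCompOf G B D) :
    ∀ (u v : ↥B') (_ : (G.induce B').Walk u v), (u : V) ∈ D → (v : V) ∉ B →
    ∃ a ∈ D, ∃ y ∈ B' \ B, G.Adj a y := by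
  intro u v w
  induction w with
  | nil => intro h1 h2; exact absurd (hD.subset h1) h2
  | @cons a b c hadj p ih =>
      intro h1 h2
      by_cases hbB : (b : V) ∈ B
      · exact ih (hD.closed a h1 b hbB hadj) h2
      · exact ⟨a, h1, b, ⟨b.2, hbB⟩, hadj⟩

lemma hasPM_union {A B : Set V} (hd : Disjoint A B) (hA : HasPM G A) (hB : HasPM G B) :
    HasPM G (A ∪ B) := by
  obtain ⟨M1, hm1, hv1⟩ := hasPM_iff.mp hA
  obtain ⟨M2, hm2, hv2⟩ := hasPM_iff.mp hB
  rw [hasPM_iff]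
  refine ⟨M1 ⊔ M2, hm1.sup hm2 ?_, ?_⟩
  · rw [hm1.support_eq_verts, hm2.support_eq_verts, hv1, hv2]; exact hd
  · rw [Subgraph.verts_sup, hv1, hv2]

end DfLemmas

section Bridge

variable {G : SimpleGraph V}

lemma imageValCompl {α : Type*} (A : Set α) (S0 : Set ↥A) :
    (Subtype.val '' S0ᶜ) = A \ (Subtype.val '' S0) := by
  ext x
  constructor
  · rintro ⟨a, ha, rfl⟩
    refine ⟨a.2, ?_⟩
    rintro ⟨b, hb, hba⟩
    exact ha (Subtype.val_injective hba ▸ hb)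
  · rintro ⟨hxA, hx⟩
    exact ⟨⟨x, hxA⟩, fun h => hx ⟨⟨x, hxA⟩, h, rfl⟩, rfl⟩

lemma IsCompOf.disjoint_of_ne {B A A' : Set V} (h : IsCompOf G B A) (h' : IsCompOf G B A')
    (hne : A' ≠ A) : Disjoint A' A := by
  by_contra hd
  rw [Set.not_disjoint_iff_nonempty_inter] at hd
  exact hne (h.eq_of_inter h' hd)

lemma exists_pm_of_GE (hGE : ∃ S : Set V, GallaiEdmonds G S)
    (ht : ∀ T : Set V, (oddSupps G Tᶜ).ncard ≤ T.ncard) :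
    ∃ M : Subgraph G, M.IsMatching ∧ M.verts = Set.univ := by
  obtain ⟨S, h1, h2, h3⟩ := hGE
  have hSempty : S = ∅ := by
    by_contra hne
    have hTS := h3 S le_rfl (Set.nonempty_iff_ne_empty.mpr hne)
    rw [minorNbhd_ncard] at hTS
    have hsub : nbhdSupps G S S ⊆ oddSupps G Sᶜ := by
      rintro A ⟨hA, ho, -⟩; exact ⟨hA, ho⟩
    have hb := (Set.ncard_le_ncard hsub (Set.toFinite _)).trans (ht S)
    omega
  subst hSempty
  have hnoodd : ∀ c : (G.induce (∅ : Set V)ᶜ).ConnectedComponent,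
      ¬ Odd (compSupp G (∅ : Set V)ᶜ c).ncard := by
    intro c hodd
    have hmem : compSupp G (∅ : Set V)ᶜ c ∈ oddSupps G (∅ : Set V)ᶜ := ⟨⟨c, rfl⟩, hodd⟩
    have h0 := ht ∅
    have hpos : 0 < (oddSupps G (∅ : Set V)ᶜ).ncard := ncard_pos_of_nonempty ⟨_, hmem⟩
    simp only [Set.ncard_empty] at h0
    omega
  have hPM : ∀ c, HasPM G (compSupp G (∅ : Set V)ᶜ c) := by
    intro c
    exact h1 c (Nat.not_odd_iff_even.mp (hnoodd c))
  have hunion := hasPM_iUnion (fun c => compSupp G (∅ : Set V)ᶜ c)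
    (fun i j hij => compSupp_disjoint hij) hPM
  have hcover : ⋃ c, compSupp G (∅ : Set V)ᶜ c = Set.univ := by
    ext x
    simp only [Set.mem_iUnion, Set.mem_univ, iff_true]
    have hx : x ∈ (∅ : Set V)ᶜ := by simp
    exact ⟨(G.induce (∅ : Set V)ᶜ).connectedComponentMk ⟨x, hx⟩,
      mem_compSupp.mpr ⟨hx, rfl⟩⟩
  rw [hcover] at hunion
  obtain ⟨M, hM, hMv⟩ := hasPM_iff.mp hunion
  exact ⟨M, hM, hMv⟩

end Bridge
section Main

universe u

theorem auxGE : ∀ (n : ℕ) (W : Type u) [Fintype W] [DecidableEq W] (G : SimpleGraph W),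
    Fintype.card W = n → ∃ S : Set W, GallaiEdmonds G S := by
  intro n
  induction n using Nat.strong_induction_on with
  | _ n ih =>
  intro W _ _ G hcard
  classical
  -- Tutte's theorem from the induction hypothesis
  have tutteLocal : ∀ A : Set W, A ≠ Set.univ →
      (∀ T ⊆ A, (oddSupps G (A \ T)).ncard ≤ T.ncard) → HasPM G A := by
    intro A hAne hA
    haveI : Fintype ↥A := Fintype.ofFinite _
    have hlt : Fintype.card ↥A < n := by
      rw [← hcard, ← Nat.card_eq_fintype_card, ← Nat.card_eq_fintype_card,
        Nat.card_coe_set_eq, ← Set.ncard_univ]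
      exact Set.ncard_lt_ncard (Set.ssubset_univ_iff.mpr hAne) (Set.toFinite _)
    have hGEA := ih _ hlt ↥A (G.induce A) rfl
    have ht : ∀ T0 : Set ↥A, (oddSupps (G.induce A) T0ᶜ).ncard ≤ T0.ncard := by
      intro T0
      have h1 : (oddSupps (G.induce A) T0ᶜ).ncard = (oddSupps G (Subtype.val '' T0ᶜ)).ncard :=
        (ncard_oddSupps_image _).symm
      rw [h1, imageValCompl]
      have h2 := hA (Subtype.val '' T0) (by rintro x ⟨a, -, rfl⟩; exact a.2)
      rwa [Set.ncard_image_of_injective _ Subtype.val_injective] at h2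
    obtain ⟨M, hM, hMv⟩ := exists_pm_of_GE hGEA ht
    exact ⟨M, hM, fun v => by rw [hMv]; trivial⟩
  -- choose a deficiency maximizer with maximal cardinality
  obtain ⟨S₀, hS₀⟩ := Finite.exists_max (fun S : Set W => df G S)
  set P : Set (Set W) := {S | ∀ S', df G S' ≤ df G S} with hPdef
  haveI : Nonempty ↥P := ⟨⟨S₀, hS₀⟩⟩
  obtain ⟨⟨S₁, hS₁⟩, hS₁max⟩ := Finite.exists_max (fun S : ↥P => (S : Set W).ncard)
  -- Step A : no even components
  have hnoeven : ∀ A, IsCompOf G S₁ᶜ A → Odd A.ncard := by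
    intro A hA
    rw [← Nat.not_even_iff_odd]
    intro hEven
    obtain ⟨v, hv⟩ := hA.nonempty
    have hgrow := df_le_insert_of_even_comp hA hEven hv
    have hmem : insert v S₁ ∈ P := fun S' => (hS₁ S').trans hgrow
    have hcard2 := hS₁max ⟨_, hmem⟩
    simp only at hcard2
    rw [Set.ncard_insert_of_notMem (hA.subset hv) (Set.toFinite _)] at hcard2
    omega
  -- Step B : odd components are factor critical
  have hFC : ∀ A, IsCompOf G S₁ᶜ A → FactorCritical G A := by
    intro A hA v hv
    apply tutteLocal
    · intro hEq
      have hvmem : v ∈ A \ {v} := hEq ▸ Set.mem_univ v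
      exact hvmem.2 rfl
    intro T hT
    have hkey := key2 hA hv hT
    have hS'compl : (S₁ ∪ insert v T)ᶜ = S₁ᶜ \ insert v T := by
      rw [Set.compl_union, Set.diff_eq]
    have hvnotS : v ∉ S₁ := hA.subset hv
    have hTdisj : Disjoint S₁ (insert v T) := by
      rw [Set.disjoint_right]
      intro x hx
      rcases Set.mem_insert_iff.mp hx with rfl | hxT
      · exact hvnotS
      · exact hA.subset (hT hxT).1
    have hvnotT : v ∉ T := fun h => (hT h).2 rfl
    have hstrict : df G (S₁ ∪ insert v T) ≤ df G S₁ - 2 := by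
      have hle := hS₁ (S₁ ∪ insert v T)
      have hne : df G (S₁ ∪ insert v T) ≠ df G S₁ := by
        intro hEq
        have hmem : S₁ ∪ insert v T ∈ P := fun S' => hEq ▸ hS₁ S'
        have hcard2 := hS₁max ⟨_, hmem⟩
        simp only at hcard2
        have hss : S₁ ⊂ S₁ ∪ insert v T := by
          refine ⟨Set.subset_union_left, fun hsub => hvnotS (hsub ?_)⟩
          exact Set.mem_union_right _ (Set.mem_insert v T)
        have := Set.ncard_lt_ncard hss (Set.toFinite _)
        omega
      have hpar1 := df_parity G (S₁ ∪ insert v T)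
      have hpar2 := df_parity G S₁
      omega
    have hcardU : (S₁ ∪ insert v T).ncard = S₁.ncard + T.ncard + 1 := by
      rw [Set.ncard_union_eq hTdisj (Set.toFinite _) (Set.toFinite _),
        Set.ncard_insert_of_notMem hvnotT (Set.toFinite _)]
      omega
    rw [df_eq, df_eq, hS'compl, hcardU] at hstrict
    push_cast at hstrict hkey
    omega
  -- the class of good maximizers, minimal cardinality choice
  set C : Set (Set W) := {S | S ∈ P ∧ (∀ A, IsCompOf G Sᶜ A → Even A.ncard → HasPM G A) ∧
      (∀ A, IsCompOf G Sᶜ A → Odd A.ncard → FactorCritical G A)} with hCdef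
  have hS₁C : S₁ ∈ C := by
    refine ⟨hS₁, fun A hA hEven => absurd (hnoeven A hA) (Nat.not_odd_iff_even.mpr hEven),
      fun A hA _ => hFC A hA⟩
  haveI : Nonempty ↥C := ⟨⟨S₁, hS₁C⟩⟩
  obtain ⟨⟨S, hSC⟩, hSmin⟩ := Finite.exists_min (fun S : ↥C => (S : Set W).ncard)
  obtain ⟨hSP, hSeven, hSodd⟩ := hSC
  -- Hall surplus
  have hHall : ∀ T ⊆ S, T.Nonempty → T.ncard + 1 ≤ (minorNbhd G S T).ncard := by
    by_contra hfail
    push_neg at hfail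
    obtain ⟨T, hTS, hTne, hNle⟩ := hfail
    rw [minorNbhd_ncard] at hNle
    have hge := key5 hSP hTS
    have hNcard : (nbhdSupps G S T).ncard = T.ncard := by omega
    -- Hall's marriage theorem setup
    haveI : Fintype ↥T := Fintype.ofFinite _
    have htfun : ∀ t : ↥T, ∃ ft : Finset (Set W), ↑ft = nbhdSupps G S {t.1} :=
      fun t => ⟨(Set.toFinite (nbhdSupps G S {t.1})).toFinset, Set.Finite.coe_toFinset _⟩
    choose tfun htfun using htfun
    have hHallCond : ∀ s : Finset ↥T, s.card ≤ (s.biUnion tfun).card := by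
      intro s
      have hT' : (Subtype.val '' (↑s : Set ↥T)) ⊆ S := by
        rintro x ⟨a, -, rfl⟩; exact hTS a.2
      have h5 := key5 hSP hT'
      have heq : nbhdSupps G S (Subtype.val '' (↑s : Set ↥T)) = ↑(s.biUnion tfun) := by
        ext A
        simp only [Finset.coe_biUnion, Set.mem_iUnion, Finset.mem_coe, ← Finset.mem_coe,
          htfun]
        constructor
        · rintro ⟨hc, ho, u, ⟨a, has, rfl⟩, w, hw, hadj⟩
          exact ⟨a, has, hc, ho, a.1, rfl, w, hw, hadj⟩
        · rintro ⟨a, has, hc, ho, u, hu, w, hw, hadj⟩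
          exact ⟨hc, ho, u, ⟨a, has, hu.symm ▸ rfl⟩, w, hw, hadj⟩
      have hcards : (Subtype.val '' (↑s : Set ↥T)).ncard = s.card := by
        rw [Set.ncard_image_of_injective _ Subtype.val_injective, Set.ncard_coe_finset]
      rw [← hcards, ← Set.ncard_coe_finset (s.biUnion tfun), ← heq]
      exact h5
    obtain ⟨f, hfinj, hfmem⟩ :=
      (Finset.all_card_le_biUnion_card_iff_exists_injective tfun).mp hHallCond
    have hfmem' : ∀ t : ↥T, f t ∈ nbhdSupps G S {t.1} := by
      intro t
      rw [← htfun t]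
      exact hfmem t
    have hfN : ∀ t : ↥T, f t ∈ nbhdSupps G S T := by
      intro t
      obtain ⟨hc, ho, u, hu, w, hw, hadj⟩ := hfmem' t
      rw [Set.mem_singleton_iff] at hu
      exact ⟨hc, ho, u, hu ▸ t.2, w, hw, hadj⟩
    have hrange : Set.range f = nbhdSupps G S T := by
      refine Set.eq_of_subset_of_ncard_le ?_ ?_ (Set.toFinite _)
      · rintro _ ⟨t, rfl⟩; exact hfN t
      · rw [hNcard, ← Set.image_univ, Set.ncard_image_of_injective _ hfinj, Set.ncard_univ,
          Nat.card_coe_set_eq]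
    have hwit : ∀ t : ↥T, ∃ w ∈ f t, G.Adj t.1 w := by
      intro t
      obtain ⟨-, -, u, hu, w, hw, hadj⟩ := hfmem' t
      rw [Set.mem_singleton_iff] at hu
      exact ⟨w, hw, hu ▸ hadj⟩
    choose wit hwitmem hwitadj using hwit
    have hfcomp : ∀ t : ↥T, IsCompOf G Sᶜ (f t) := fun t => (hfmem' t).1
    have hfodd : ∀ t : ↥T, Odd (f t).ncard := fun t => (hfmem' t).2.1
    have hfsub : ∀ t : ↥T, f t ⊆ Sᶜ := fun t => (hfcomp t).subset
    have htnotf : ∀ (t t' : ↥T), t.1 ∉ f t' := fun t t' h => (hfsub t' h) (hTS t.2)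
    set EA : Set (Set W) :=
      {A | IsCompOf G Sᶜ A ∧ Even A.ncard ∧ ∃ u ∈ T, ∃ w ∈ A, G.Adj u w} with hEAdef
    have hEAcomp : ∀ a : ↥EA, IsCompOf G Sᶜ a.1 := fun a => a.2.1
    have hEAeven : ∀ a : ↥EA, Even (a.1).ncard := fun a => a.2.2.1
    -- each piece has a perfect matching
    have hpmt : ∀ t : ↥T, HasPM G ({t.1} ∪ f t) := by
      intro t
      have hrest := hSodd (f t) (hfcomp t) (hfodd t) (wit t) (hwitmem t)
      have hpair := hasPM_pair (hwitadj t)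
      have hdisj2 : Disjoint ({t.1, wit t} : Set W) (f t \ {wit t}) := by
        rw [Set.disjoint_left]
        rintro x hx hx2
        rcases hx with rfl | rfl
        · exact htnotf t t hx2.1
        · exact hx2.2 rfl
      have hun := hasPM_union hdisj2 hpair hrest
      have hsets : ({t.1, wit t} : Set W) ∪ (f t \ {wit t}) = {t.1} ∪ f t := by
        ext x
        constructor
        · rintro ((rfl | rfl) | ⟨hx, -⟩)
          · exact Set.mem_union_left _ rfl
          · exact Set.mem_union_right _ (hwitmem t)
          · exact Set.mem_union_right _ hx
        · rintro (rfl | hx)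
          · exact Set.mem_union_left _ (Set.mem_insert _ _)
          · by_cases hxw : x = wit t
            · exact Set.mem_union_left _ (hxw ▸ Set.mem_insert_of_mem _ rfl)
            · exact Set.mem_union_right _ ⟨hx, hxw⟩
      rwa [hsets] at hun
    have hpmEA : ∀ a : ↥EA, HasPM G a.1 := fun a => hSeven a.1 (hEAcomp a) (hEAeven a)
    -- disjointness of the pieces
    have hdisjTT : ∀ (t t' : ↥T), t ≠ t' → Disjoint ({t.1} ∪ f t) ({t'.1} ∪ f t') := by
      intro t t' htt
      have hft : f t ≠ f t' := fun h => htt (hfinj h)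
      have hdisjf : Disjoint (f t) (f t') := (hfcomp t').disjoint_of_ne (hfcomp t) hft
      rw [Set.disjoint_left]
      rintro x (rfl | hx) (h2 | h2)
      · exact htt (Subtype.ext h2)
      · exact htnotf t t' h2
      · exact htnotf t' t (h2 ▸ hx)
      · exact Set.disjoint_left.mp hdisjf hx h2
    have hdisjTA : ∀ (t : ↥T) (a : ↥EA), Disjoint ({t.1} ∪ f t) a.1 := by
      intro t a
      have hne : f t ≠ a.1 := by
        intro h
        have := hEAeven a
        rw [← h] at this
        exact (Nat.not_even_iff_odd.mpr (hfodd t)) this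
      have hdisjf : Disjoint (f t) a.1 := (hEAcomp a).disjoint_of_ne (hfcomp t) hne
      rw [Set.disjoint_left]
      rintro x (rfl | hx) h2
      · exact ((hEAcomp a).subset h2) (hTS t.2)
      · exact Set.disjoint_left.mp hdisjf hx h2
    have hdisjAA : ∀ (a a' : ↥EA), a ≠ a' → Disjoint a.1 a'.1 := by
      intro a a' haa
      exact (hEAcomp a').disjoint_of_ne (hEAcomp a) (fun h => haa (Subtype.ext h))
    -- the global matching region
    set R : Set W := (⋃ t : ↥T, ({t.1} ∪ f t)) ∪ ⋃₀ EA with hRdef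
    have hRPM : HasPM G R := by
      have hglue := hasPM_iUnion (G := G) (ι := ↥T ⊕ ↥EA)
        (Sum.elim (fun t => {t.1} ∪ f t) (fun a => a.1)) ?_ ?_
      · have hsets : (⋃ i : ↥T ⊕ ↥EA, Sum.elim (fun t : ↥T => {t.1} ∪ f t)
            (fun a : ↥EA => a.1) i) = R := by
          rw [Set.iUnion_sum, hRdef, Set.sUnion_eq_iUnion]
          rfl
        rwa [hsets] at hglue
      · rintro (t | a) (t' | a') hne
        · exact hdisjTT t t' (fun h => hne (h ▸ rfl))
        · exact hdisjTA t a'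
        · exact (hdisjTA t' a).symm
        · exact hdisjAA a a' (fun h => hne (h ▸ rfl))
      · rintro (t | a)
        · exact hpmt t
        · exact hpmEA a
    have hScsub : Sᶜ ⊆ (S \ T)ᶜ := fun x hx hxST => hx hxST.1
    have hRsub : R ⊆ (S \ T)ᶜ := by
      rw [hRdef]
      rintro x (hx | hx)
      · obtain ⟨t, hxt⟩ := Set.mem_iUnion.mp hx
        rcases hxt with rfl | hxf
        · exact fun hxST => hxST.2 t.2
        · exact hScsub (hfsub t hxf)
      · obtain ⟨a, haEA, hxa⟩ := hx
        exact hScsub ((show IsCompOf G Sᶜ a from haEA.1).subset hxa)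
    -- merged components have perfect matchings
    obtain ⟨MR, hMR, hMRv⟩ := hasPM_iff.mp hRPM
    have hmerged : ∀ K, IsCompOf G (S \ T)ᶜ K → (K ∩ T).Nonempty → HasPM G K := by
      rintro K hK ⟨t0, ht0K, ht0T⟩
      refine hasPM_restrict hMR hK (by rw [hMRv]; exact hRsub) ?_
      rw [hMRv]
      intro x hxK
      by_cases hxT : x ∈ T
      · exact Set.mem_union_left _
          (Set.mem_iUnion.mpr ⟨⟨x, hxT⟩, Set.mem_union_left _ rfl⟩)
      · have hxSc : x ∈ Sᶜ := fun hxS => (hK.subset hxK) ⟨hxS, hxT⟩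
        obtain ⟨D, hD, hxD⟩ := exists_isCompOf_mem (G := G) hxSc
        have hDK : D ⊆ K := hK.subset_of_inter hD hScsub ⟨x, hxD, hxK⟩
        have ht0nSc : (t0 : W) ∉ Sᶜ := fun h => h (hTS ht0T)
        obtain ⟨w0⟩ := (isCompOf_iff.mp hK).2.2.1 x hxK t0 ht0K
        obtain ⟨a, haD, y, hy, hadj⟩ := exists_boundary hD _ _ w0 hxD ht0nSc
        have hyT : y ∈ T := by
          by_contra hyT
          exact (hK.subset hy.1) ⟨Set.not_notMem.mp hy.2, hyT⟩
        by_cases hDodd : Odd D.ncard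
        · have hDN : D ∈ nbhdSupps G S T := ⟨hD, hDodd, y, hyT, a, haD, hadj.symm⟩
          rw [← hrange] at hDN
          obtain ⟨t, ht⟩ := hDN
          refine Set.mem_union_left _ (Set.mem_iUnion.mpr ⟨t, Set.mem_union_right _ ?_⟩)
          rw [ht]; exact hxD
        · exact Set.mem_union_right _
            ⟨D, ⟨hD, Nat.not_odd_iff_even.mp hDodd, y, hyT, a, haD, hadj.symm⟩, hxD⟩
    -- S \ T is in the class C: contradiction with minimality
    have hS'P : S \ T ∈ P := by
      intro S'
      refine (hSP S').trans ?_
      have h3 := key3 (G := G) S T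
      rw [df_eq, df_eq]
      have h5 : (S \ T).ncard = S.ncard - T.ncard := Set.ncard_diff hTS
      have h6 : T.ncard ≤ S.ncard := Set.ncard_le_ncard hTS (Set.toFinite _)
      push_cast
      omega
    have hAoldsc : ∀ A, IsCompOf G (S \ T)ᶜ A → ¬ (A ∩ T).Nonempty → A ⊆ Sᶜ := by
      intro A hA hAT x hx hxS
      have h1 := hA.subset hx
      have hxT : x ∈ T := by
        by_contra hxT
        exact h1 ⟨hxS, hxT⟩
      exact hAT ⟨x, hx, hxT⟩
    have hS'C : S \ T ∈ C := by
      refine ⟨hS'P, ?_, ?_⟩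
      · intro A hA hEven
        by_cases hAT : (A ∩ T).Nonempty
        · exact hmerged A hA hAT
        · exact hSeven A (hA.mono_down (hAoldsc A hA hAT) hScsub) hEven
      · intro A hA hOdd
        by_cases hAT : (A ∩ T).Nonempty
        · exact absurd (hmerged A hA hAT).even_ncard (Nat.not_even_iff_odd.mpr hOdd)
        · exact hSodd A (hA.mono_down (hAoldsc A hA hAT) hScsub) hOdd
    have hlt := hSmin ⟨_, hS'C⟩
    simp only at hlt
    have hss : S \ T ⊂ S := by
      obtain ⟨t, ht⟩ := hTne
      exact ⟨Set.diff_subset, fun hsub => (hsub (hTS ht)).2 ht⟩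
    have := Set.ncard_lt_ncard hss (Set.toFinite _)
    omega
  refine ⟨S, ?_, ?_, hHall⟩
  · intro c hEven; exact hSeven _ ⟨c, rfl⟩ hEven
  · intro c hOdd; exact hSodd _ ⟨c, rfl⟩ hOdd

end Main

/-- Every finite graph has a Gallai-Edmonds set. -/
theorem stmt_7 (G : SimpleGraph V) : ∃ S : Set V, GallaiEdmonds G S :=
  auxGE (Fintype.card V) V G rfl
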